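/- arXiv:2510.10838 — 2 statements merged into one kernel-verified Lean document; each statement's English description precedes it below -/
import Mathlib

section
/- Let G be a median graph and Y a nonempty set of vertices of G. Then the convex hull of Y (the intersection of all convex sets of vertices containing Y) equals the intersection of all halfspaces of G containing Y (with the convention that this intersection is the whole vertex set if no halfspace contains Y). -/
/-- `m` is a median of `x`, `y`, `z` in the graph `G`. -/
def IsMedianOf {V : Type*} (G : SimpleGraph V) (m x y z : V) : Prop :=
  G.dist x y = G.dist x m + G.dist m y ∧
  G.dist y z = G.dist y m + G.dist m z ∧
  G.dist x z = G.dist x m + G.dist m z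

/-- A median graph: connected, and every triple of vertices has a unique median. -/
def MedianGraph {V : Type*} (G : SimpleGraph V) : Prop :=
  G.Connected ∧ ∀ x y z : V, ∃! m : V, IsMedianOf G m x y z

/-- A set `S` of vertices is convex: every vertex on a geodesic (a walk realizing
the graph distance) between two vertices of `S` belongs to `S`. -/
def ConvexSet {V : Type*} (G : SimpleGraph V) (S : Set V) : Prop :=
  ∀ u ∈ S, ∀ v ∈ S, ∀ w : G.Walk u v, w.length = G.dist u v → ∀ x ∈ w.support, x ∈ S

/-- Two edges are square-opposite: they are opposite sides of a 4-cycle. -/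
def SquareOpposite {V : Type*} (G : SimpleGraph V) (e f : Sym2 V) : Prop :=
  ∃ a b c d : V, a ≠ b ∧ a ≠ c ∧ a ≠ d ∧ b ≠ c ∧ b ≠ d ∧ c ≠ d ∧
    G.Adj a b ∧ G.Adj c d ∧ G.Adj a c ∧ G.Adj b d ∧ e = s(a, b) ∧ f = s(c, d)

/-- A hyperplane: an equivalence class of edges under the equivalence relation
generated by square-opposition. -/
def IsHyperplane {V : Type*} (G : SimpleGraph V) (H : Set (Sym2 V)) : Prop :=
  ∃ e ∈ G.edgeSet, H = {f | Relation.EqvGen (SquareOpposite G) e f}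

/-- A halfspace: the vertex set of a connected component of the graph obtained by
deleting the edges of a hyperplane. -/
def IsHalfspace {V : Type*} (G : SimpleGraph V) (A : Set V) : Prop :=
  ∃ H : Set (Sym2 V), IsHyperplane G H ∧
    ∃ c : (G.deleteEdges H).ConnectedComponent, A = c.supp

open SimpleGraph Finset

namespace MGAux

variable {V : Type*} {G : SimpleGraph V}

/-- The side set: vertices strictly closer to `a` than to `b`. -/
def W (G : SimpleGraph V) (a b : V) : Set V := {x | G.dist x a < G.dist x b}

theorem mem_W {a b x : V} : x ∈ W G a b ↔ G.dist x a < G.dist x b := Iff.rfl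

theorem dist_zero (hc : G.Connected) {x y : V} (h : G.dist x y = 0) : x = y :=
  hc.dist_eq_zero_iff.mp h

/-- For adjacent a b, every vertex is at distance exactly one more from one than from
the other. -/
theorem step (hG : MedianGraph G) {a b : V} (hab : G.Adj a b) (x : V) :
    G.dist x b = G.dist x a + 1 ∨ G.dist x a = G.dist x b + 1 := by
  obtain ⟨m, ⟨h1, h2, h3⟩, -⟩ := hG.2 x a b
  have hd : G.dist a b = 1 := dist_eq_one_iff_adj.mpr hab
  rw [hd] at h2
  rcases Nat.add_eq_one_iff.mp h2.symm with ⟨ham, hmb⟩ | ⟨ham, hmb⟩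
  · have hma : m = a := dist_zero hG.1 (by rwa [SimpleGraph.dist_comm])
    rw [hma] at h3
    rw [hd] at h3
    left; omega
  · have hmb' : m = b := dist_zero hG.1 hmb
    have hd' : G.dist b a = 1 := by rwa [SimpleGraph.dist_comm]
    rw [hmb'] at h1
    rw [hd'] at h1
    right; omega

theorem side_or (hG : MedianGraph G) {a b : V} (hab : G.Adj a b) (x : V) :
    x ∈ W G a b ∨ x ∈ W G b a := by
  rcases step hG hab x with h | h
  · left; rw [mem_W]; omega
  · right; rw [mem_W]; omega

theorem side_not_both (hG : MedianGraph G) {a b : V} (hab : G.Adj a b) (x : V)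
    (h1 : x ∈ W G a b) (h2 : x ∈ W G b a) : False := by
  rw [mem_W] at h1 h2; omega

theorem mem_W_self {a b : V} (hab : G.Adj a b) : a ∈ W G a b := by
  rw [mem_W, SimpleGraph.dist_self, dist_eq_one_iff_adj.mpr hab]; omega

theorem side_compl (hG : MedianGraph G) {a b : V} (hab : G.Adj a b) (x : V) :
    x ∈ W G a b ↔ x ∉ W G b a := by
  constructor
  · intro h1 h2; exact side_not_both hG hab x h1 h2
  · intro h; rcases side_or hG hab x with h' | h'
    · exact h'
    · exact absurd h' h

theorem no_triangle (hG : MedianGraph G) {a b c : V} (hab : G.Adj a b) (hbc : G.Adj b c)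
    (hac : G.Adj a c) : False := by
  have h1 : G.dist c a = 1 := by rw [dist_comm]; exact dist_eq_one_iff_adj.mpr hac
  have h2 : G.dist c b = 1 := by rw [dist_comm]; exact dist_eq_one_iff_adj.mpr hbc
  rcases step hG hab c with h | h <;> omega

theorem dist_two (hG : MedianGraph G) {x y : V} (hne : x ≠ y) (hnadj : ¬ G.Adj x y)
    {z : V} (h1 : G.Adj x z) (h2 : G.Adj z y) : G.dist x y = 2 := by
  have hle : G.dist x y ≤ 2 := by
    calc G.dist x y ≤ G.dist x z + G.dist z y := hG.1.dist_triangle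
    _ ≤ 2 := by
        rw [dist_eq_one_iff_adj.mpr h1, dist_eq_one_iff_adj.mpr h2]
  have h0 : G.dist x y ≠ 0 := fun h => hne (dist_zero hG.1 h)
  have h1' : G.dist x y ≠ 1 := fun h => hnadj (dist_eq_one_iff_adj.mp h)
  omega

/-- Quadrangle condition. -/
theorem quad (hG : MedianGraph G) {u v w z : V} (huv : G.Adj u v) (huw : G.Adj u w)
    (hvw : v ≠ w) (hv : G.dist v z + 1 = G.dist u z) (hw : G.dist w z + 1 = G.dist u z) :
    ∃ t : V, G.Adj v t ∧ G.Adj w t ∧ G.dist t z + 1 = G.dist v z := by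
  have hnadj : ¬ G.Adj v w := fun h => no_triangle hG huv h huw
  have hvw2 : G.dist v w = 2 := dist_two hG hvw hnadj huv.symm huw
  obtain ⟨m, ⟨h1, h2, h3⟩, -⟩ := hG.2 v w z
  rw [hvw2] at h1
  have hcm : G.dist w v = G.dist v w := SimpleGraph.dist_comm
  have hmv : m ≠ v := by
    rintro rfl
    rw [SimpleGraph.dist_self] at h1
    omega
  have hmw : m ≠ w := by
    rintro rfl
    rw [SimpleGraph.dist_self] at h1
    omega
  have hvm : G.dist v m = 1 := by
    have h0 : G.dist v m ≠ 0 := fun h => hmv (dist_zero hG.1 h).symm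
    have h0' : G.dist m w ≠ 0 := fun h => hmw (dist_zero hG.1 h)
    omega
  have hmw1 : G.dist m w = 1 := by omega
  refine ⟨m, dist_eq_one_iff_adj.mp hvm, (dist_eq_one_iff_adj.mp hmw1).symm, by omega⟩

/-- Distances around a crossing edge. -/
theorem crossing (hG : MedianGraph G) {a b u v : V} (hab : G.Adj a b) (huv : G.Adj u v)
    (hu : u ∈ W G a b) (hv : v ∈ W G b a) :
    G.dist v a = G.dist u a + 1 ∧ G.dist u b = G.dist u a + 1 ∧
    G.dist v b = G.dist u a ∧ G.dist v a = G.dist v b + 1 := by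
  rw [mem_W] at hu hv
  have h1 := step hG hab u
  have h2 := step hG hab v
  have h3 := step hG huv a
  have h4 := step hG huv b
  rw [SimpleGraph.dist_comm (u := a) (v := u), SimpleGraph.dist_comm (u := a) (v := v)] at h3
  rw [SimpleGraph.dist_comm (u := b) (v := u), SimpleGraph.dist_comm (u := b) (v := v)] at h4
  rcases h1 with h1 | h1 <;> rcases h2 with h2 | h2 <;>
    rcases h3 with h3 | h3 <;> rcases h4 with h4 | h4 <;> omega

/-- A geodesic sequence: consecutive vertices adjacent and total length realizes distance. -/
def IsGeo (G : SimpleGraph V) (f : ℕ → V) (n : ℕ) : Prop :=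
  (∀ i < n, G.Adj (f i) (f (i + 1))) ∧ G.dist (f 0) (f n) = n

theorem chain_dist_le (hG : MedianGraph G) {f : ℕ → V} {n : ℕ}
    (hadj : ∀ i < n, G.Adj (f i) (f (i + 1))) :
    ∀ k i, i + k ≤ n → G.dist (f i) (f (i + k)) ≤ k := by
  intro k
  induction k with
  | zero => intro i _; simp
  | succ k ih =>
    intro i hik
    have h1 : G.dist (f i) (f (i + k)) ≤ k := ih i (by omega)
    have h2 : G.dist (f (i + k)) (f (i + k + 1)) = 1 :=
      dist_eq_one_iff_adj.mpr (hadj (i + k) (by omega))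
    have t : G.dist (f i) (f (i + k + 1)) ≤
        G.dist (f i) (f (i + k)) + G.dist (f (i + k)) (f (i + k + 1)) := hG.1.dist_triangle
    show G.dist (f i) (f (i + k + 1)) ≤ k + 1
    omega

theorem IsGeo.seg (hG : MedianGraph G) {f : ℕ → V} {n : ℕ} (h : IsGeo G f n)
    {i j : ℕ} (hij : i ≤ j) (hjn : j ≤ n) : G.dist (f i) (f j) = j - i := by
  obtain ⟨hadj, hdist⟩ := h
  have l1 : G.dist (f 0) (f i) ≤ i := by
    have := chain_dist_le hG hadj i 0 (by omega); simpa using this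
  have l2 : G.dist (f i) (f j) ≤ j - i := by
    have := chain_dist_le hG hadj (j - i) i (by omega)
    rwa [show i + (j - i) = j by omega] at this
  have l3 : G.dist (f j) (f n) ≤ n - j := by
    have := chain_dist_le hG hadj (n - j) j (by omega)
    rwa [show j + (n - j) = n by omega] at this
  have t1 : G.dist (f 0) (f n) ≤ G.dist (f 0) (f i) + G.dist (f i) (f n) := hG.1.dist_triangle
  have t2 : G.dist (f i) (f n) ≤ G.dist (f i) (f j) + G.dist (f j) (f n) := hG.1.dist_triangle
  omega

/-- The `K_{2,3}` configuration is impossible in a median graph. -/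
theorem k23 (hG : MedianGraph G) {a b p x q t : V} (hab : G.Adj a b)
    (hpx : G.Adj p x) (hxq : G.Adj x q) (hpq : G.dist p q = 2)
    (hp : p ∈ W G a b) (hq : q ∈ W G a b) (hx : x ∈ W G b a)
    (hpt : G.Adj p t) (hqt : G.Adj q t)
    (hta : G.dist t a + 1 = G.dist p a) (htb : G.dist t b = G.dist t a + 1) : False := by
  obtain ⟨c1, c2, c3, c4⟩ := crossing hG hab hpx hp hx
  obtain ⟨c5, c6, c7, c8⟩ := crossing hG hab hxq.symm hq hx
  have hk1 : 1 ≤ G.dist p a := by omega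
  have hxt : x ≠ t := by
    intro h; rw [h] at c1; omega
  have hnadjxt : ¬ G.Adj x t := fun h => no_triangle hG hpx h hpt
  have hxt2 : G.dist x t = 2 := dist_two hG hxt hnadjxt hpx.symm hpt
  obtain ⟨m, ⟨m1, m2, m3⟩, -⟩ := hG.2 x t b
  rw [hxt2] at m1
  have htx2 : G.dist t x = 2 := by rw [SimpleGraph.dist_comm]; exact hxt2
  have hmx : m ≠ x := by
    rintro rfl; omega
  have hmt : m ≠ t := by
    rintro rfl; omega
  have hxm1 : G.dist x m = 1 := by
    have h1 : G.dist x m ≠ 0 := fun h => hmx (dist_zero hG.1 h).symm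
    have h2 : G.dist m t ≠ 0 := fun h => hmt (dist_zero hG.1 h)
    omega
  have hmt1 : G.dist m t = 1 := by omega
  have hadjxm : G.Adj x m := dist_eq_one_iff_adj.mp hxm1
  have hadjmt : G.Adj m t := dist_eq_one_iff_adj.mp hmt1
  have hmb : G.dist m b + 1 = G.dist x b := by omega
  have hmp : m ≠ p := by
    rintro rfl; omega
  have hmq : m ≠ q := by
    rintro rfl; omega
  have hnadjpm : ¬ G.Adj p m := fun h => no_triangle hG h hadjxm.symm hpx
  have hnadjqm : ¬ G.Adj q m := fun h => no_triangle hG h hadjxm.symm hxq.symm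
  have hpm2 : G.dist p m = 2 := dist_two hG (Ne.symm hmp) hnadjpm hpx hadjxm
  have hqm2 : G.dist q m = 2 := dist_two hG (Ne.symm hmq) hnadjqm hxq.symm hadjxm
  have dpx : G.dist p x = 1 := dist_eq_one_iff_adj.mpr hpx
  have dxq : G.dist x q = 1 := dist_eq_one_iff_adj.mpr hxq
  have dqx : G.dist q x = 1 := dist_eq_one_iff_adj.mpr hxq.symm
  have dxm : G.dist x m = 1 := hxm1
  have dpt : G.dist p t = 1 := dist_eq_one_iff_adj.mpr hpt
  have dtq : G.dist t q = 1 := dist_eq_one_iff_adj.mpr hqt.symm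
  have dqt : G.dist q t = 1 := dist_eq_one_iff_adj.mpr hqt
  have dtm : G.dist t m = 1 := by rw [SimpleGraph.dist_comm]; exact hmt1
  have hmedx : IsMedianOf G x p q m := by
    refine ⟨?_, ?_, ?_⟩ <;> omega
  have hmedt : IsMedianOf G t p q m := by
    refine ⟨?_, ?_, ?_⟩ <;> omega
  obtain ⟨m0, -, uniq⟩ := hG.2 p q m
  exact hxt ((uniq x hmedx).trans (uniq t hmedt).symm)

/-- The key lemma: there is no geodesic between two vertices of `W a b` whose interior
vertices all lie in `W b a`. -/
theorem no_run (hG : MedianGraph G) {a b : V} (hab : G.Adj a b) :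
    ∀ N n (f : ℕ → V), IsGeo G f n → 2 ≤ n →
      f 0 ∈ W G a b → f n ∈ W G a b → (∀ i, 0 < i → i < n → f i ∈ W G b a) →
      (∑ i ∈ Finset.Ico 1 n, G.dist (f i) a) ≤ N → False := by
  classical
  intro N
  induction N using Nat.strong_induction_on with
  | _ N IH =>
  intro n f hgeo hn h0 hnn hint hsum
  obtain ⟨hadj, hdist⟩ := hgeo
  set g : ℕ → ℕ := fun i => G.dist (f i) a with hg
  -- crossing at position 0
  have hc0 : g 1 = g 0 + 1 := by
    have := crossing hG hab (hadj 0 (by omega)) h0 (hint 1 (by omega) (by omega))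
    exact this.1
  -- crossing at the end
  have hcn : g (n - 1) = g n + 1 := by
    have hadj' : G.Adj (f n) (f (n - 1)) := by
      have := hadj (n - 1) (by omega)
      rw [show n - 1 + 1 = n by omega] at this
      exact this.symm
    have := crossing hG hab hadj' hnn (hint (n - 1) (by omega) (by omega))
    exact this.1
  -- the peak
  set P : ℕ → Prop := fun j => 1 ≤ j ∧ g (j - 1) + 1 = g j with hP
  have hP1 : P 1 := ⟨le_refl 1, by simpa using hc0.symm⟩
  set j := Nat.findGreatest P (n - 1) with hj
  have hj1 : 1 ≤ j := Nat.le_findGreatest (by omega) hP1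
  have hjn : j ≤ n - 1 := Nat.findGreatest_le _
  have hPj : P j := Nat.findGreatest_spec (m := 1) (by omega) hP1
  have hpeakr : g (j + 1) + 1 = g j := by
    rcases eq_or_lt_of_le hjn with heq | hlt
    · rw [heq, show n - 1 + 1 = n by omega]; omega
    · have hnP : ¬ P (j + 1) := by
        refine Nat.findGreatest_is_greatest (P := P) (n := n - 1) (k := j + 1) ?_ (by omega)
        rw [← hj]; omega
      have : ¬ (g j + 1 = g (j + 1)) := by
        intro h; exact hnP ⟨by omega, by simpa using h⟩
      have c1 : G.dist a (f j) = g j := SimpleGraph.dist_comm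
      have c2 : G.dist a (f (j + 1)) = g (j + 1) := SimpleGraph.dist_comm
      rcases step hG (hadj j (by omega)) a with h | h <;> omega
  -- the surgery
  have hu1v : G.Adj (f j) (f (j - 1)) := by
    have := hadj (j - 1) (by omega)
    rw [show j - 1 + 1 = j by omega] at this
    exact this.symm
  have hu2v : G.Adj (f j) (f (j + 1)) := hadj j (by omega)
  have hne12 : f (j - 1) ≠ f (j + 1) := by
    intro he
    have d1 : G.dist (f 0) (f (j - 1)) = j - 1 :=
      IsGeo.seg hG ⟨hadj, hdist⟩ (by omega) (by omega)
    have d2 : G.dist (f 0) (f (j + 1)) = j + 1 :=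
      IsGeo.seg hG ⟨hadj, hdist⟩ (by omega) (by omega)
    rw [he] at d1
    omega
  obtain ⟨t, ht1, ht2, ht3⟩ := quad hG hu1v hu2v hne12 (by exact hPj.2) (by exact hpeakr)
  have hta : G.dist t a + 2 = g j := by
    have e : G.dist (f (j - 1)) a = g (j - 1) := rfl
    have := hPj.2
    omega
  have hsum' : (∑ i ∈ Finset.Ico 1 n, g i) ≤ N := hsum
  set f' : ℕ → V := fun i => if i = j then t else f i with hf'
  have hf'j : f' j = t := by simp [hf']
  have hf'ne : ∀ i, i ≠ j → f' i = f i := fun i hi => by simp [hf', hi]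
  have hadj' : ∀ i < n, G.Adj (f' i) (f' (i + 1)) := by
    intro i hi
    rcases eq_or_ne i j with rfl | hij
    · rw [hf'j, hf'ne (j + 1) (by omega)]
      exact ht2.symm
    · rcases eq_or_ne (i + 1) j with he | hne
      · rw [hf'ne i hij, he, hf'j]
        have : i = j - 1 := by omega
        rw [this]
        exact ht1
      · rw [hf'ne i hij, hf'ne (i + 1) hne]
        exact hadj i hi
  have hdist' : G.dist (f' 0) (f' n) = n := by
    rw [hf'ne 0 (by omega), hf'ne n (by omega)]
    exact hdist
  have hgeo' : IsGeo G f' n := ⟨hadj', hdist'⟩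
  -- sum bookkeeping
  have hjmem : j ∈ Finset.Ico 1 n := by
    rw [Finset.mem_Ico]; omega
  have hS : (∑ i ∈ (Finset.Ico 1 n).erase j, g i) + g j = ∑ i ∈ Finset.Ico 1 n, g i :=
    Finset.sum_erase_add _ _ hjmem
  have hg1le : g 1 ≤ ∑ i ∈ Finset.Ico 1 n, g i :=
    Finset.single_le_sum (fun i _ => Nat.zero_le _) (by rw [Finset.mem_Ico]; omega)
  have hNpos : 1 ≤ N := by omega
  rcases step hG hab t with htb | htb
  · -- t ∈ W a b
    have htW : t ∈ W G a b := by rw [mem_W]; omega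
    rcases eq_or_lt_of_le hj1 with hj1' | hj2
    · -- j = 1
      rcases eq_or_lt_of_le hn with hn2 | hn3
      · -- base case : n = 2, j = 1
        have e1 : f (j - 1) = f 0 := by rw [← hj1']
        have e2 : f (j + 1) = f n := by rw [← hj1', ← hn2]
        rw [e1] at ht1 ht3
        rw [e2] at ht2
        refine k23 hG hab (hadj 0 (by omega)) ?_ ?_ h0 hnn (hint 1 (by omega) (by omega))
          ht1 ht2 ht3 htb
        · have := hadj 1 (by omega)
          rw [show (1 : ℕ) + 1 = n by omega] at this
          exact this
        · rw [hdist]; omega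
      · -- n ≥ 3 : take the suffix
        refine IH (N - 1) (by omega) (n - 1) (fun i => f' (i + 1)) ⟨?_, ?_⟩ (by omega)
          ?_ ?_ ?_ ?_
        · intro i hi
          exact hadj' (i + 1) (by omega)
        · show G.dist (f' 1) (f' (n - 1 + 1)) = n - 1
          rw [show n - 1 + 1 = n by omega]
          exact IsGeo.seg hG hgeo' (by omega) (by omega)
        · show f' 1 ∈ W G a b
          rw [hj1', hf'j]
          exact htW
        · show f' (n - 1 + 1) ∈ W G a b
          rw [show n - 1 + 1 = n by omega, hf'ne n (by omega)]
          exact hnn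
        · intro i hi1 hi2
          show f' (i + 1) ∈ W G b a
          rw [hf'ne (i + 1) (by omega)]
          exact hint (i + 1) (by omega) (by omega)
        · show (∑ i ∈ Finset.Ico 1 (n - 1), G.dist (f' (i + 1)) a) ≤ N - 1
          have hre : (∑ i ∈ Finset.Ico 1 (n - 1), G.dist (f' (i + 1)) a)
              = ∑ i ∈ Finset.Ico 2 n, g i := by
            rw [Finset.sum_Ico_eq_sum_range, Finset.sum_Ico_eq_sum_range]
            refine Finset.sum_congr (by congr 1 <;> omega) (fun i _ => ?_)
            rw [hf'ne (1 + i + 1) (by omega)]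
            show G.dist (f (1 + i + 1)) a = G.dist (f (2 + i)) a
            rw [show 1 + i + 1 = 2 + i by omega]
          have hsplit : (∑ i ∈ Finset.Ico 1 n, g i)
              = g 1 + ∑ i ∈ Finset.Ico 2 n, g i :=
            Finset.sum_eq_sum_Ico_succ_bot (by omega : 1 < n) g
          have hgj2 : 2 ≤ g 1 := by
            have : g 1 = g j := by rw [← hj1']
            omega
          rw [hre]
          omega
    · -- j ≥ 2 : take the prefix
      refine IH (N - 1) (by omega) j f' ⟨?_, ?_⟩ (by omega) ?_ ?_ ?_ ?_
      · intro i hi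
        exact hadj' i (by omega)
      · show G.dist (f' 0) (f' j) = j
        have := IsGeo.seg hG hgeo' (Nat.zero_le j) (by omega)
        simpa using this
      · rw [hf'ne 0 (by omega)]; exact h0
      · rw [hf'j]; exact htW
      · intro i hi1 hi2
        rw [hf'ne i (by omega)]
        exact hint i hi1 (by omega)
      · have heq : (∑ i ∈ Finset.Ico 1 j, G.dist (f' i) a)
            = ∑ i ∈ Finset.Ico 1 j, g i :=
          Finset.sum_congr rfl (fun i hi => by
            rw [hf'ne i (by have := (Finset.mem_Ico.mp hi).2; omega)])
        have hext : (∑ i ∈ Finset.Ico 1 (j + 1), g i)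
            = (∑ i ∈ Finset.Ico 1 j, g i) + g j :=
          Finset.sum_Ico_succ_top (by omega) g
        have hsub : (∑ i ∈ Finset.Ico 1 (j + 1), g i) ≤ ∑ i ∈ Finset.Ico 1 n, g i :=
          Finset.sum_le_sum_of_subset (Finset.Ico_subset_Ico le_rfl (by omega))
        rw [heq]
        omega
  · -- t ∈ W b a : replace in place
    have htW : t ∈ W G b a := by rw [mem_W]; omega
    refine IH (N - 1) (by omega) n f' hgeo' hn ?_ ?_ ?_ ?_
    · rw [hf'ne 0 (by omega)]; exact h0
    · rw [hf'ne n (by omega)]; exact hnn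
    · intro i hi1 hi2
      rcases eq_or_ne i j with rfl | hij
      · rw [hf'j]; exact htW
      · rw [hf'ne i hij]; exact hint i hi1 hi2
    · have hS' : (∑ i ∈ (Finset.Ico 1 n).erase j, G.dist (f' i) a) + G.dist (f' j) a
          = ∑ i ∈ Finset.Ico 1 n, G.dist (f' i) a :=
        Finset.sum_erase_add _ _ hjmem
      have heq : (∑ i ∈ (Finset.Ico 1 n).erase j, G.dist (f' i) a)
          = ∑ i ∈ (Finset.Ico 1 n).erase j, g i :=
        Finset.sum_congr rfl (fun i hi => by rw [hf'ne i (Finset.ne_of_mem_erase hi)])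
      rw [hf'j] at hS'
      omega

theorem sym2_rep (f : Sym2 V) : ∃ u v : V, f = s(u, v) := by
  induction f using Sym2.ind with
  | _ u v => exact ⟨u, v, rfl⟩

theorem neighbor_toward (hG : MedianGraph G) {u z : V} (h : G.dist u z ≠ 0) :
    ∃ w, G.Adj u w ∧ G.dist w z + 1 = G.dist u z := by
  obtain ⟨p, hp⟩ := hG.1.exists_walk_length_eq_dist u z
  cases p with
  | nil => rw [← hp] at h; simp at h
  | @cons _ w _ hadj q =>
    refine ⟨w, hadj, ?_⟩
    have h1 : G.dist w z ≤ q.length := SimpleGraph.dist_le q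
    have h2 : G.dist u z ≤ G.dist u w + G.dist w z := hG.1.dist_triangle
    have h3 : G.dist u w = 1 := dist_eq_one_iff_adj.mpr hadj
    have h4 : q.length + 1 = G.dist u z := by
      simpa using hp
    omega

/-- `W a b` is a convex set. -/
theorem W_convex (hG : MedianGraph G) {a b : V} (hab : G.Adj a b) :
    ConvexSet G (W G a b) := by
  classical
  intro u hu v hv w hlen x hx
  by_contra hxW
  have hxB : x ∈ W G b a := (side_or hG hab x).resolve_left hxW
  obtain ⟨i0, hi0x, hi0n⟩ := SimpleGraph.Walk.mem_support_iff_exists_getVert.mp hx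
  have hgeo : IsGeo G w.getVert w.length := by
    refine ⟨fun i hi => w.adj_getVert_succ hi, ?_⟩
    rw [SimpleGraph.Walk.getVert_zero, SimpleGraph.Walk.getVert_length]
    exact hlen.symm
  have h0 : w.getVert 0 ∈ W G a b := by rw [SimpleGraph.Walk.getVert_zero]; exact hu
  have hN : w.getVert w.length ∈ W G a b := by
    rw [SimpleGraph.Walk.getVert_length]; exact hv
  have hxB' : w.getVert i0 ∈ W G b a := by rw [hi0x]; exact hxB
  set P : ℕ → Prop := fun i => w.getVert i ∈ W G a b with hPdef
  have hP0 : P 0 := h0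
  have hnPi0 : ¬ P i0 := fun hp => side_not_both hG hab _ hp hxB'
  set l := Nat.findGreatest P i0 with hl
  have hPl : P l := Nat.findGreatest_spec (Nat.zero_le i0) hP0
  have hlle : l ≤ i0 := Nat.findGreatest_le _
  have hllt : l < i0 := by
    rcases eq_or_lt_of_le hlle with he | hlt
    · exact absurd (he ▸ hPl) hnPi0
    · exact hlt
  have hi0lt : i0 < w.length := by
    rcases eq_or_lt_of_le hi0n with he | hlt
    · exact absurd (he ▸ hxB') (fun hx' => side_not_both hG hab _ hN hx')
    · exact hlt
  have hQ : ∃ i, i0 < i ∧ i ≤ w.length ∧ P i := ⟨w.length, hi0lt, le_refl _, hN⟩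
  set r := Nat.find hQ with hr
  obtain ⟨hri0, hrn, hPr⟩ := Nat.find_spec hQ
  have hmin : ∀ i, i < r → ¬(i0 < i ∧ i ≤ w.length ∧ P i) := fun i hi => Nat.find_min hQ hi
  have hlr2 : l + 2 ≤ r := by omega
  -- the run from l to r
  refine no_run hG hab (∑ i ∈ Finset.Ico 1 (r - l), G.dist (w.getVert (l + i)) a)
    (r - l) (fun i => w.getVert (l + i)) ⟨?_, ?_⟩ (by omega) ?_ ?_ ?_ (le_refl _)
  · intro i hi
    exact w.adj_getVert_succ (by omega)
  · show G.dist (w.getVert (l + 0)) (w.getVert (l + (r - l))) = r - l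
    rw [show l + (r - l) = r by omega, show l + 0 = l from rfl]
    exact IsGeo.seg hG hgeo (by omega) hrn
  · show w.getVert (l + 0) ∈ W G a b
    exact hPl
  · show w.getVert (l + (r - l)) ∈ W G a b
    rw [show l + (r - l) = r by omega]
    exact hPr
  · intro i hi1 hi2
    show w.getVert (l + i) ∈ W G b a
    have hnP : ¬ P (l + i) := by
      rcases le_or_gt (l + i) i0 with hle | hlt
      · exact Nat.findGreatest_is_greatest (by omega) hle
      · intro hp
        exact hmin (l + i) (by omega) ⟨hlt, by omega, hp⟩
    exact (side_or hG hab _).resolve_left hnP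

/-- Opposite sides of a square determine the same side partition (one direction). -/
theorem square_W_mp (hG : MedianGraph G) {s t s' t' : V} (h1 : G.Adj s t) (h2 : G.Adj s' t')
    (h3 : G.Adj s s') (h4 : G.Adj t t') (hst' : s ≠ t') (hts' : t ≠ s') {x : V}
    (hx : x ∈ W G s t) : x ∈ W G s' t' := by
  have hxst : G.dist x t = G.dist x s + 1 := by
    rw [mem_W] at hx
    rcases step hG h1 x with h | h <;> omega
  have e1 := step hG h3 x
  have e2 := step hG h4 x
  have e3 := step hG h2 x
  rw [mem_W] at hx ⊢
  rcases e1 with e1 | e1 <;> rcases e2 with e2 | e2 <;> rcases e3 with e3 | e3 <;> try omega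
  -- remaining case : d x s' = d x s + 1, d x t = d x t' + 1, d x s' = d x t' + 1
  exfalso
  have hnadjst' : ¬ G.Adj s t' := fun h => no_triangle hG h1 h4 h
  have hst'2 : G.dist s t' = 2 := dist_two hG hst' hnadjst' h1 h4
  have ct'x : G.dist t' x = G.dist x t' := SimpleGraph.dist_comm
  have csx : G.dist s x = G.dist x s := SimpleGraph.dist_comm
  have ct'2 : G.dist t' s = 2 := by rw [SimpleGraph.dist_comm]; exact hst'2
  obtain ⟨m, ⟨m1, m2, m3⟩, -⟩ := hG.2 s t' x
  rw [hst'2] at m1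
  have hms : m ≠ s := by rintro rfl; omega
  have hmt' : m ≠ t' := by rintro rfl; omega
  have hsm1 : G.dist s m = 1 := by
    have u1 : G.dist s m ≠ 0 := fun h => hms (dist_zero hG.1 h).symm
    have u2 : G.dist m t' ≠ 0 := fun h => hmt' (dist_zero hG.1 h)
    omega
  have hmt'1 : G.dist m t' = 1 := by omega
  have hmx : G.dist m x = G.dist x s - 1 := by omega
  have hk1 : 1 ≤ G.dist x s := by omega
  have cmx : G.dist x m = G.dist m x := SimpleGraph.dist_comm
  have hadjsm : G.Adj s m := dist_eq_one_iff_adj.mp hsm1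
  have hadjmt' : G.Adj m t' := dist_eq_one_iff_adj.mp hmt'1
  have ctx : G.dist t x = G.dist x t := SimpleGraph.dist_comm
  have cs'x : G.dist s' x = G.dist x s' := SimpleGraph.dist_comm
  have hmt : m ≠ t := by rintro rfl; omega
  have hms' : m ≠ s' := by rintro rfl; omega
  -- K_{2,3} on {s, t'} vs {t, s', m}
  have hnadjts' : ¬ G.Adj t s' := fun h => no_triangle hG h1 h h3
  have hnadjtm : ¬ G.Adj t m := fun h => no_triangle hG h1 h hadjsm
  have hnadjs'm : ¬ G.Adj s' m := fun h => no_triangle hG h3 h hadjsm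
  have dts' : G.dist t s' = 2 := dist_two hG hts' hnadjts' h1.symm h3
  have dtm : G.dist t m = 2 := dist_two hG hmt.symm hnadjtm h1.symm hadjsm
  have ds'm : G.dist s' m = 2 := dist_two hG hms'.symm hnadjs'm h3.symm hadjsm
  have dts : G.dist t s = 1 := dist_eq_one_iff_adj.mpr h1.symm
  have dss' : G.dist s s' = 1 := dist_eq_one_iff_adj.mpr h3
  have ds's : G.dist s' s = 1 := dist_eq_one_iff_adj.mpr h3.symm
  have dsm : G.dist s m = 1 := hsm1
  have dtt' : G.dist t t' = 1 := dist_eq_one_iff_adj.mpr h4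
  have dt's' : G.dist t' s' = 1 := dist_eq_one_iff_adj.mpr h2.symm
  have ds't' : G.dist s' t' = 1 := dist_eq_one_iff_adj.mpr h2
  have dt'm : G.dist t' m = 1 := by rw [SimpleGraph.dist_comm]; exact hmt'1
  have hmeds : IsMedianOf G s t s' m := by
    refine ⟨?_, ?_, ?_⟩ <;> omega
  have hmedt' : IsMedianOf G t' t s' m := by
    refine ⟨?_, ?_, ?_⟩ <;> omega
  obtain ⟨m0, -, uniq⟩ := hG.2 t s' m
  exact hst' ((uniq s hmeds).trans (uniq t' hmedt').symm)

theorem square_W (hG : MedianGraph G) {s t s' t' : V} (h1 : G.Adj s t) (h2 : G.Adj s' t')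
    (h3 : G.Adj s s') (h4 : G.Adj t t') (hst' : s ≠ t') (hts' : t ≠ s') (x : V) :
    x ∈ W G s t ↔ x ∈ W G s' t' :=
  ⟨square_W_mp hG h1 h2 h3 h4 hst' hts',
   square_W_mp hG h2 h1 h3.symm h4.symm (Ne.symm hts') (Ne.symm hst')⟩

/-- The invariant carried along a square-opposition equivalence chain. -/
def SameSides (G : SimpleGraph V) (e f : Sym2 V) : Prop :=
  (e ∈ G.edgeSet ↔ f ∈ G.edgeSet) ∧
  ∀ u v u' v' : V, G.Adj u v → G.Adj u' v' → e = s(u, v) → f = s(u', v') →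
    (∀ x, x ∈ W G u v ↔ x ∈ W G u' v') ∨ (∀ x, x ∈ W G u v ↔ x ∈ W G v' u')

theorem eqvgen_sameSides (hG : MedianGraph G) {e f : Sym2 V}
    (h : Relation.EqvGen (SquareOpposite G) e f) : SameSides G e f := by
  induction h with
  | rel e f hso =>
    obtain ⟨a', b', c', d', n1, n2, n3, n4, n5, n6, h1, h2, h3, h4, he, hf⟩ := hso
    subst he hf
    constructor
    · simp only [SimpleGraph.mem_edgeSet]
      exact ⟨fun _ => h2, fun _ => h1⟩
    · intro u v u' v' huv hu'v' heu hfv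
      have h5 : ∀ x, x ∈ W G a' b' ↔ x ∈ W G c' d' := square_W hG h1 h2 h3 h4 n3 n4
      have h6 : ∀ x, x ∈ W G b' a' ↔ x ∈ W G d' c' :=
        square_W hG h1.symm h2.symm h4 h3 n4 n3
      rcases Sym2.eq_iff.mp heu with ⟨rfl, rfl⟩ | ⟨rfl, rfl⟩ <;>
        rcases Sym2.eq_iff.mp hfv with ⟨rfl, rfl⟩ | ⟨rfl, rfl⟩
      · exact Or.inl h5
      · exact Or.inr h5
      · exact Or.inr h6
      · exact Or.inl h6
  | refl e =>
    refine ⟨Iff.rfl, fun u v u' v' huv hu'v' he hf => ?_⟩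
    rcases Sym2.eq_iff.mp (he.symm.trans hf) with ⟨rfl, rfl⟩ | ⟨rfl, rfl⟩
    · exact Or.inl (fun x => Iff.rfl)
    · exact Or.inr (fun x => Iff.rfl)
  | symm e f h ih =>
    refine ⟨ih.1.symm, fun u v u' v' huv hu'v' he hf => ?_⟩
    rcases ih.2 u' v' u v hu'v' huv hf he with hL | hR
    · exact Or.inl (fun x => (hL x).symm)
    · refine Or.inr (fun x => ?_)
      rw [side_compl hG huv x, side_compl hG hu'v'.symm x]
      exact not_congr (hR x).symm
  | trans e f g h1 h2 ih1 ih2 =>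
    refine ⟨ih1.1.trans ih2.1, fun u v u'' v'' huv hu''v'' he hg => ?_⟩
    obtain ⟨p, q, rfl⟩ := sym2_rep f
    have hpq : G.Adj p q := by
      rw [← SimpleGraph.mem_edgeSet]
      exact ih1.1.mp (by rw [he, SimpleGraph.mem_edgeSet]; exact huv)
    rcases ih1.2 u v p q huv hpq he rfl with hL1 | hR1 <;>
      rcases ih2.2 p q u'' v'' hpq hu''v'' rfl hg with hL2 | hR2
    · exact Or.inl (fun x => (hL1 x).trans (hL2 x))
    · exact Or.inr (fun x => (hL1 x).trans (hR2 x))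
    · refine Or.inr (fun x => ?_)
      rw [hR1 x, side_compl hG hpq.symm x, side_compl hG hu''v''.symm x]
      exact not_congr (hL2 x)
    · refine Or.inl (fun x => ?_)
      rw [hR1 x, side_compl hG hpq.symm x, side_compl hG hu''v'' x]
      exact not_congr (hR2 x)

/-- An edge crossing the wall of `s(a,b)` lies in its square class. -/
theorem cross_mem_class (hG : MedianGraph G) {a b : V} (hab : G.Adj a b) :
    ∀ k {u v : V}, G.dist u a = k → G.Adj u v → u ∈ W G a b → v ∈ W G b a →
      Relation.EqvGen (SquareOpposite G) s(a, b) s(u, v) := by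
  intro k
  induction k using Nat.strong_induction_on with
  | _ k IH =>
  intro u v hk huv hu hv
  obtain ⟨cr1, cr2, cr3, cr4⟩ := crossing hG hab huv hu hv
  rcases Nat.eq_zero_or_pos k with rfl | hkpos
  · have hua : u = a := dist_zero hG.1 hk
    subst hua
    have hvb : v = b := dist_zero hG.1 (by omega)
    subst hvb
    exact Relation.EqvGen.refl _
  · obtain ⟨w, huw, hwa⟩ := neighbor_toward hG (u := u) (z := a) (by omega)
    have hwb : G.dist w b = k := by
      have htri : G.dist w b ≤ G.dist w a + G.dist a b := hG.1.dist_triangle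
      have hab1 : G.dist a b = 1 := dist_eq_one_iff_adj.mpr hab
      have hst := step hG huw b
      rw [SimpleGraph.dist_comm (u := b) (v := u), SimpleGraph.dist_comm (u := b) (v := w)]
        at hst
      rcases hst with h | h <;> omega
    have hwW : w ∈ W G a b := by rw [mem_W]; omega
    have hvw : v ≠ w := by
      rintro rfl; omega
    obtain ⟨t, hvt, hwt, htb⟩ := quad hG (z := b) huv huw hvw (by omega) (by omega)
    have hta : G.dist t a = k := by
      have htri : G.dist v a ≤ G.dist v t + G.dist t a := hG.1.dist_triangle
      have hvt1 : G.dist v t = 1 := dist_eq_one_iff_adj.mpr hvt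
      rcases step hG hab t with h | h <;> omega
    have htW : t ∈ W G b a := by rw [mem_W]; omega
    have hprev : Relation.EqvGen (SquareOpposite G) s(a, b) s(w, t) :=
      IH (k - 1) (by omega) (by omega) hwt hwW htW
    refine hprev.trans _ _ _ (Relation.EqvGen.rel _ _ ?_)
    have htu : t ≠ u := by rintro rfl; omega
    exact ⟨w, t, u, v, hwt.ne, Ne.symm huw.ne, Ne.symm hvw, htu, Ne.symm hvt.ne, huv.ne,
      hwt, huv, huw.symm, hvt.symm, rfl, rfl⟩

/-- Every edge of the square class of `s(a,b)` crosses the wall. -/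
theorem mem_class_cross (hG : MedianGraph G) {a b : V} (hab : G.Adj a b) {f : Sym2 V}
    (hf : Relation.EqvGen (SquareOpposite G) s(a, b) f) :
    ∃ u v : V, f = s(u, v) ∧ G.Adj u v ∧ u ∈ W G a b ∧ v ∈ W G b a := by
  have hs := eqvgen_sameSides hG hf
  obtain ⟨u, v, rfl⟩ := sym2_rep f
  have huv : G.Adj u v := by
    rw [← SimpleGraph.mem_edgeSet]
    exact hs.1.mp (by rw [SimpleGraph.mem_edgeSet]; exact hab)
  rcases hs.2 a b u v hab huv rfl rfl with hL | hR
  · refine ⟨u, v, rfl, huv, (hL u).mpr (mem_W_self huv), ?_⟩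
    have hvnot : ¬ v ∈ W G u v := by
      rw [side_compl hG huv v]
      intro h'
      exact h' (mem_W_self huv.symm)
    have : ¬ v ∈ W G a b := fun h' => hvnot ((hL v).mp h')
    exact (side_or hG hab v).resolve_left this
  · refine ⟨v, u, Sym2.eq_swap, huv.symm, (hR v).mpr (mem_W_self huv.symm), ?_⟩
    have hunot : ¬ u ∈ W G v u := by
      rw [side_compl hG huv.symm u]
      intro h'
      exact h' (mem_W_self huv)
    have : ¬ u ∈ W G a b := fun h' => hunot ((hR u).mp h')
    exact (side_or hG hab u).resolve_left this

/-- In the graph with the square class of `s(a,b)` deleted, adjacency preserves sides. -/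
theorem del_adj_side (hG : MedianGraph G) {a b : V} (hab : G.Adj a b)
    {x y : V} (hxy : (G.deleteEdges {f | Relation.EqvGen (SquareOpposite G) s(a, b) f}).Adj x y) :
    (x ∈ W G a b ↔ y ∈ W G a b) := by
  rw [SimpleGraph.deleteEdges_adj] at hxy
  obtain ⟨hadj, hnot⟩ := hxy
  constructor
  · intro hx
    by_contra hy
    have hyB : y ∈ W G b a := (side_or hG hab y).resolve_left hy
    exact hnot (Set.mem_setOf_eq ▸ cross_mem_class hG hab (G.dist x a) rfl hadj hx hyB)
  · intro hy
    by_contra hx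
    have hxB : x ∈ W G b a := (side_or hG hab x).resolve_left hx
    have := cross_mem_class hG hab (G.dist y a) rfl hadj.symm hy hxB
    refine hnot ?_
    rw [show s(x, y) = s(y, x) from Sym2.eq_swap]
    exact this

theorem del_reachable_side (hG : MedianGraph G) {a b : V} (hab : G.Adj a b)
    {x y : V}
    (hxy : (G.deleteEdges {f | Relation.EqvGen (SquareOpposite G) s(a, b) f}).Reachable x y) :
    (x ∈ W G a b ↔ y ∈ W G a b) := by
  obtain ⟨p⟩ := hxy
  induction p with
  | nil => exact Iff.rfl
  | cons h q ih => exact (del_adj_side hG hab h).trans ih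

theorem reachable_of_side (hG : MedianGraph G) {a b : V} (hab : G.Adj a b)
    {x y : V} (hx : x ∈ W G a b) (hy : y ∈ W G a b) :
    (G.deleteEdges {f | Relation.EqvGen (SquareOpposite G) s(a, b) f}).Reachable x y := by
  obtain ⟨p, hp⟩ := hG.1.exists_walk_length_eq_dist x y
  have hsupp : ∀ z ∈ p.support, z ∈ W G a b :=
    W_convex hG hab x hx y hy p hp
  clear hp
  induction p with
  | nil => exact SimpleGraph.Reachable.refl _
  | @cons u z v h q ih =>
    have hu' : u ∈ W G a b := hsupp u (by simp)
    have hz : z ∈ W G a b := hsupp z (by simp)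
    have hnot : s(u, z) ∉ {f | Relation.EqvGen (SquareOpposite G) s(a, b) f} := by
      intro hmem
      obtain ⟨u', v', heq, hu'v', hside1, hside2⟩ := mem_class_cross hG hab hmem
      rcases Sym2.eq_iff.mp heq with ⟨rfl, rfl⟩ | ⟨rfl, rfl⟩
      · exact side_not_both hG hab _ hz hside2
      · exact side_not_both hG hab _ hu' hside2
    have hadj : (G.deleteEdges {f | Relation.EqvGen (SquareOpposite G) s(a, b) f}).Adj u z :=
      SimpleGraph.deleteEdges_adj.mpr ⟨h, hnot⟩
    refine hadj.reachable.trans (ih hz hy (fun w hw => hsupp w ?_))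
    simp only [SimpleGraph.Walk.support_cons, List.mem_cons]
    exact Or.inr hw

/-- Characterization of halfspaces in a median graph. -/
theorem halfspace_iff (hG : MedianGraph G) {A : Set V} :
    IsHalfspace G A ↔ ∃ a b : V, G.Adj a b ∧ A = W G a b := by
  constructor
  · rintro ⟨H, ⟨e, he, rfl⟩, c, rfl⟩
    obtain ⟨a, b, rfl⟩ := sym2_rep e
    have hab : G.Adj a b := he
    obtain ⟨u, hu⟩ := c.exists_rep
    rcases side_or hG hab u with huW | huW
    · refine ⟨a, b, hab, ?_⟩
      ext z
      rw [SimpleGraph.ConnectedComponent.mem_supp_iff, ← hu]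
      refine Iff.trans SimpleGraph.ConnectedComponent.eq ?_
      constructor
      · intro hr
        exact (del_reachable_side hG hab hr).mpr huW
      · intro hz
        exact reachable_of_side hG hab hz huW
    · refine ⟨b, a, hab.symm, ?_⟩
      have hswap : {f | Relation.EqvGen (SquareOpposite G) s(a, b) f}
          = {f | Relation.EqvGen (SquareOpposite G) s(b, a) f} := by
        rw [show s(a, b) = s(b, a) from Sym2.eq_swap]
      ext z
      rw [SimpleGraph.ConnectedComponent.mem_supp_iff, ← hu]
      refine Iff.trans SimpleGraph.ConnectedComponent.eq ?_
      constructor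
      · intro hr
        rw [hswap] at hr
        exact (del_reachable_side hG hab.symm hr).mpr huW
      · intro hz
        have := reachable_of_side hG hab.symm hz huW
        rwa [← hswap] at this
  · rintro ⟨a, b, hab, rfl⟩
    refine ⟨{f | Relation.EqvGen (SquareOpposite G) s(a, b) f},
      ⟨s(a, b), hab, rfl⟩, SimpleGraph.connectedComponentMk _ a, ?_⟩
    ext z
    rw [SimpleGraph.ConnectedComponent.mem_supp_iff, SimpleGraph.ConnectedComponent.eq]
    constructor
    · intro hz
      exact reachable_of_side hG hab hz (mem_W_self hab)
    · intro hr
      exact (del_reachable_side hG hab hr).mpr (mem_W_self hab)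

end MGAux

open MGAux in
/-- In a median graph, the convex hull of a nonempty set of vertices equals the
intersection of all halfspaces containing it. -/
theorem convexHull_eq_sInter_halfspaces {V : Type*} (G : SimpleGraph V)
    (hG : MedianGraph G) (Y : Set V) (hY : Y.Nonempty) :
    ⋂₀ {S : Set V | ConvexSet G S ∧ Y ⊆ S} = ⋂₀ {A : Set V | IsHalfspace G A ∧ Y ⊆ A} := by
  ext x
  simp only [Set.mem_sInter, Set.mem_setOf_eq]
  constructor
  · intro h A hA
    obtain ⟨a, b, hab, rfl⟩ := (halfspace_iff hG).mp hA.1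
    exact h _ ⟨W_convex hG hab, hA.2⟩
  · intro h S hS
    obtain ⟨hconv, hYS⟩ := hS
    by_contra hx
    obtain ⟨y0, hy0⟩ := hY
    have hy0S : y0 ∈ S := hYS hy0
    have hDne : {n | ∃ s ∈ S, G.dist x s = n}.Nonempty := ⟨G.dist x y0, y0, hy0S, rfl⟩
    obtain ⟨g, hgS, hgk⟩ := Nat.sInf_mem hDne
    set k := sInf {n | ∃ s ∈ S, G.dist x s = n} with hkdef
    have hmin : ∀ s ∈ S, k ≤ G.dist x s := fun s hs => Nat.sInf_le ⟨s, hs, rfl⟩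
    have hk0 : k ≠ 0 := by
      intro h0
      refine hx ?_
      have : x = g := dist_zero hG.1 (by omega)
      rw [this]
      exact hgS
    have cgx : G.dist g x = G.dist x g := SimpleGraph.dist_comm
    obtain ⟨u, hgu, hud⟩ := neighbor_toward hG (u := g) (z := x) (by omega)
    have cux : G.dist u x = G.dist x u := SimpleGraph.dist_comm
    have huS : u ∉ S := by
      intro hu
      have := hmin u hu
      omega
    have hSW : ∀ s ∈ S, s ∈ W G g u := by
      intro s hs
      rcases step hG hgu s with hstep | hstep
      · rw [mem_W]; omega
      · exfalso
        obtain ⟨p, hp⟩ := hG.1.exists_walk_length_eq_dist s u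
        have hpg : (p.concat hgu.symm).length = G.dist s g := by
          rw [SimpleGraph.Walk.length_concat, hp]; omega
        refine huS (hconv s hs g hgS (p.concat hgu.symm) hpg u ?_)
        rw [SimpleGraph.Walk.support_concat]
        simp [SimpleGraph.Walk.end_mem_support p]
    have hhalf : IsHalfspace G (W G g u) := (halfspace_iff hG).mpr ⟨g, u, hgu, rfl⟩
    have hxin : x ∈ W G g u := h _ ⟨hhalf, fun y hy => hSW y (hYS hy)⟩
    rw [mem_W] at hxin
    omega
end

section
/- Serre's theorem on elliptic actions on trees: let T be a nonempty tree and let a group G act on T by automorphisms. Suppose G is generated by elements g_1, …, g_n such that, setting g_0 = 1, the product g_i g_j fixes some vertex of T for all 0 ≤ i < j ≤ n (in particular each generator fixes a vertex). Then G fixes a vertex: there is a vertex v of T with g·v = v for every g in G. -/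
open SimpleGraph



section serreaux
variable {V : Type*} {T : SimpleGraph V}

lemma list_map_eq_self {α : Type*} (f : α → α) :
    ∀ l : List α, l.map f = l → ∀ x ∈ l, f x = x := by
  intro l
  induction l with
  | nil => simp
  | cons a t ih =>
    intro h x hx
    simp only [List.map_cons, List.cons.injEq] at h
    rcases List.mem_cons.1 hx with hx | hx
    · rw [hx]; exact h.1
    · exact ih h.2 x hx

lemma tree_path_eq (hT : T.IsTree) {u v : V} (p q : T.Walk u v)
    (hp : p.IsPath) (hq : q.IsPath) : p = q := by
  obtain ⟨r, -, hr⟩ := hT.existsUnique_path u v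
  rw [hr p hp, hr q hq]

lemma tree_length_eq_dist (hT : T.IsTree) {u v : V} (p : T.Walk u v)
    (hp : p.IsPath) : p.length = T.dist u v := by
  obtain ⟨q, hq, hl⟩ := hT.isConnected.exists_path_of_dist u v
  rw [tree_path_eq hT p q hp hq, hl]

/-- splitting a path at an interior vertex splits the distance -/
lemma dist_split (hT : T.IsTree) {u v c : V} (p : T.Walk u v) (hp : p.IsPath)
    (hc : c ∈ p.support) : T.dist u v = T.dist u c + T.dist c v := by
  classical
  rw [← tree_length_eq_dist hT p hp, ← tree_length_eq_dist hT _ (hp.takeUntil hc),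
    ← tree_length_eq_dist hT _ (hp.dropUntil hc), ← Walk.length_append, Walk.take_spec]

lemma getVert_dist (hT : T.IsTree) {u v c : V} (p : T.Walk u v) (hp : p.IsPath)
    (hc : c ∈ p.support) : p.getVert (T.dist u c) = c := by
  classical
  have hl : (p.takeUntil c hc).length = T.dist u c :=
    tree_length_eq_dist hT _ (hp.takeUntil hc)
  conv_lhs => rw [← Walk.take_spec p hc]
  rw [Walk.getVert_append, ← hl]
  simp [Walk.getVert_zero]

lemma eq_of_mem_dist (hT : T.IsTree) {u v c c' : V} (p : T.Walk u v) (hp : p.IsPath)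
    (hc : c ∈ p.support) (hc' : c' ∈ p.support) (h : T.dist u c = T.dist u c') :
    c = c' := by
  rw [← getVert_dist hT p hp hc, ← getVert_dist hT p hp hc', h]


lemma append_path {u v w : V} {p : T.Walk u v} {q : T.Walk v w} (hp : p.IsPath) (hq : q.IsPath)
    (h : ∀ t, t ∈ p.support → t ∈ q.support → t = v) : (p.append q).IsPath := by
  rw [Walk.isPath_def, Walk.support_append]
  have htail : q.support.tail.Nodup := by
    have := hq.support_nodup
    rw [q.support_eq_cons] at this
    exact this.of_cons
  refine hp.support_nodup.append htail ?_
  intro t htp htq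
  have htq' : t ∈ q.support := List.mem_of_mem_tail htq
  have : t = v := h t htp htq'
  subst this
  have := hq.support_nodup
  rw [q.support_eq_cons] at this
  exact (List.nodup_cons.1 this).1 htq

lemma median (hT : T.IsTree) (x y z : V) :
    ∃ c : V,
      (∀ p : T.Walk x y, p.IsPath → c ∈ p.support) ∧
      (∀ p : T.Walk x z, p.IsPath → c ∈ p.support) ∧
      (∀ p : T.Walk y z, p.IsPath → c ∈ p.support) ∧
      T.dist x y = T.dist x c + T.dist c y ∧
      T.dist x z = T.dist x c + T.dist c z ∧
      T.dist y z = T.dist y c + T.dist c z := by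
  classical
  obtain ⟨p, hp, -⟩ := hT.isConnected.exists_path_of_dist y z
  obtain ⟨c, hcp, hmin⟩ : ∃ c ∈ p.support, ∀ w ∈ p.support, T.dist x c ≤ T.dist x w := by
    obtain ⟨c, hc1, hc2⟩ := p.support.toFinset.exists_min_image (fun w => T.dist x w)
      ⟨y, by simp⟩
    exact ⟨c, by simpa using hc1, fun w hw => hc2 w (by simpa using hw)⟩
  obtain ⟨q, hq, hql⟩ := hT.isConnected.exists_path_of_dist x c
  have key : ∀ w, w ∈ q.support → w ∈ p.support → w = c := by
    intro w hwq hwp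
    have h1 : T.dist x c = T.dist x w + T.dist w c := dist_split hT q hq hwq
    have h2 : T.dist x c ≤ T.dist x w := hmin w hwp
    have h0 : T.dist w c = 0 := by omega
    rcases (dist_eq_zero_iff_eq_or_not_reachable.1 h0) with h | h
    · exact h
    · exact absurd (hT.isConnected w c) h
  -- path x → z through c
  have hd : (p.dropUntil c hcp).IsPath := hp.dropUntil hcp
  have ht : (p.takeUntil c hcp).IsPath := hp.takeUntil hcp
  have hr2 : (q.append (p.dropUntil c hcp)).IsPath :=
    append_path hq hd fun t h1 h2 => key t h1 (Walk.support_dropUntil_subset p hcp h2)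
  have hr1 : (q.append (p.takeUntil c hcp).reverse).IsPath :=
    append_path hq ht.reverse fun t h1 h2 => key t h1
      (Walk.support_takeUntil_subset p hcp (by rwa [Walk.support_reverse, List.mem_reverse] at h2))
  have hcr2 : c ∈ (q.append (p.dropUntil c hcp)).support := by
    rw [Walk.mem_support_append_iff]; exact Or.inl q.end_mem_support
  have hcr1 : c ∈ (q.append (p.takeUntil c hcp).reverse).support := by
    rw [Walk.mem_support_append_iff]; exact Or.inl q.end_mem_support
  refine ⟨c, ?_, ?_, ?_, ?_, ?_, ?_⟩
  · intro p' hp'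
    rw [tree_path_eq hT p' _ hp' hr1]; exact hcr1
  · intro p' hp'
    rw [tree_path_eq hT p' _ hp' hr2]; exact hcr2
  · intro p' hp'
    rw [tree_path_eq hT p' _ hp' hp]; exact hcp
  · rw [← tree_length_eq_dist hT _ hr1, Walk.length_append, Walk.length_reverse,
      tree_length_eq_dist hT _ hq, tree_length_eq_dist hT _ ht, dist_comm (G:=T) (u:=y) (v:=c)]
  · rw [← tree_length_eq_dist hT _ hr2, Walk.length_append,
      tree_length_eq_dist hT _ hq, tree_length_eq_dist hT _ hd]
  · exact dist_split hT p hp hcp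

def ConvexIn (T : SimpleGraph V) (S : Set V) : Prop :=
  ∀ u ∈ S, ∀ v ∈ S, ∀ p : T.Walk u v, p.IsPath → ∀ w ∈ p.support, w ∈ S

lemma helly3 (hT : T.IsTree) {A B C : Set V} (hA : ConvexIn T A) (hB : ConvexIn T B)
    (hC : ConvexIn T C) (hAB : (A ∩ B).Nonempty) (hAC : (A ∩ C).Nonempty)
    (hBC : (B ∩ C).Nonempty) : (A ∩ B ∩ C).Nonempty := by
  obtain ⟨x, hx⟩ := hAB
  obtain ⟨y, hy⟩ := hAC
  obtain ⟨z, hz⟩ := hBC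
  obtain ⟨c, m1, m2, m3, -, -, -⟩ := median hT x y z
  obtain ⟨pxy, hpxy, -⟩ := hT.isConnected.exists_path_of_dist x y
  obtain ⟨pxz, hpxz, -⟩ := hT.isConnected.exists_path_of_dist x z
  obtain ⟨pyz, hpyz, -⟩ := hT.isConnected.exists_path_of_dist y z
  exact ⟨c, ⟨hA x hx.1 y hy.1 pxy hpxy c (m1 pxy hpxy),
    hB x hx.2 z hz.1 pxz hpxz c (m2 pxz hpxz)⟩,
    hC y hy.2 z hz.2 pyz hpyz c (m3 pyz hpyz)⟩

lemma helly (hT : T.IsTree) : ∀ (m : ℕ) (A : Fin (m + 1) → Set V),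
    (∀ i, ConvexIn T (A i)) → (∀ i j, (A i ∩ A j).Nonempty) → ∃ v, ∀ i, v ∈ A i := by
  intro m
  induction m with
  | zero =>
    intro A _ hpair
    obtain ⟨v, hv⟩ := hpair 0 0
    exact ⟨v, fun i => by rw [Fin.eq_zero i]; exact hv.1⟩
  | succ m ih =>
    intro A hconv hpair
    set B : Fin (m + 1) → Set V := fun i =>
      if (i : ℕ) < m then A ⟨i, by omega⟩
      else A ⟨m, by omega⟩ ∩ A ⟨m + 1, by omega⟩ with hB
    have hBconv : ∀ i, ConvexIn T (B i) := by
      intro i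
      by_cases hi : (i : ℕ) < m
      · simp only [hB, hi, if_true]; exact hconv _
      · simp only [hB, hi, if_false]
        intro u hu v hv p hp w hw
        exact ⟨hconv _ u hu.1 v hv.1 p hp w hw, hconv _ u hu.2 v hv.2 p hp w hw⟩
    have hBpair : ∀ i j, (B i ∩ B j).Nonempty := by
      intro i j
      by_cases hi : (i : ℕ) < m <;> by_cases hj : (j : ℕ) < m <;>
        simp only [hB, hi, hj, if_true, if_false]
      · exact hpair _ _
      · obtain ⟨v, hv⟩ := helly3 hT (hconv ⟨m, by omega⟩) (hconv ⟨m + 1, by omega⟩)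
          (hconv ⟨i, by omega⟩) (hpair _ _) (hpair _ _) (hpair _ _)
        exact ⟨v, hv.2, hv.1⟩
      · obtain ⟨v, hv⟩ := helly3 hT (hconv ⟨m, by omega⟩) (hconv ⟨m + 1, by omega⟩)
          (hconv ⟨j, by omega⟩) (hpair _ _) (hpair _ _) (hpair _ _)
        exact ⟨v, hv.1, hv.2⟩
      · obtain ⟨v, hv⟩ := hpair (⟨m, by omega⟩ : Fin (m + 2)) ⟨m + 1, by omega⟩
        exact ⟨v, ⟨hv.1, hv.2⟩, ⟨hv.1, hv.2⟩⟩
    obtain ⟨v, hv⟩ := ih B hBconv hBpair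
    refine ⟨v, fun i => ?_⟩
    by_cases hi : (i : ℕ) < m
    · have h1 := hv ⟨i, by omega⟩
      simp only [hB, hi, if_true] at h1
      exact h1
    · have hmem := hv ⟨m, by omega⟩
      simp only [hB, lt_irrefl, if_false] at hmem
      have hle : (i : ℕ) ≤ m + 1 := by omega
      rcases Nat.lt_or_ge (i : ℕ) (m + 1) with h | h
      · have hi' : i = ⟨m, by omega⟩ := Fin.ext (by simp; omega)
        rw [hi']
        exact hmem.1
      · have hi' : i = ⟨m + 1, by omega⟩ := Fin.ext (by simp; omega)
        rw [hi']
        exact hmem.2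


variable {Γ : Type*} [Group Γ] [MulAction Γ V]

variable (hact : ∀ (g : Γ) (u v : V), T.Adj u v ↔ T.Adj (g • u) (g • v))
include hact

def homOf (g : Γ) : T →g T := ⟨fun v => g • v, fun {u v} h => (hact g u v).1 h⟩

lemma homOf_apply (g : Γ) (v : V) : homOf hact g v = g • v := rfl

lemma smul_walk_isPath (g : Γ) {u v : V} (p : T.Walk u v) (hp : p.IsPath) :
    (p.map (homOf hact g)).IsPath :=
  (Walk.map_isPath_iff_of_injective (f := homOf hact g)
    (fun a b hab => MulAction.injective g hab) (p := p)).2 hp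

lemma dist_smul_eq (hT : T.IsTree) (g : Γ) (u v : V) :
    T.dist (g • u) (g • v) = T.dist u v := by
  obtain ⟨p, hp, hl⟩ := hT.isConnected.exists_path_of_dist u v
  have h2 := tree_length_eq_dist hT (p.map (homOf hact g)) (smul_walk_isPath hact g p hp)
  rw [Walk.length_map] at h2
  rw [← hl]
  exact h2.symm

lemma fix_convex (hT : T.IsTree) {g : Γ} {u v : V} (hu : g • u = u) (hv : g • v = v)
    (p : T.Walk u v) (hp : p.IsPath) : ∀ w ∈ p.support, g • w = w := by
  have hq : ((p.map (homOf hact g)).copy hu hv).IsPath := by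
    exact (Walk.isPath_copy _ _ _).2 (smul_walk_isPath hact g p hp)
  have heq := tree_path_eq hT ((p.map (homOf hact g)).copy hu hv) p hq hp
  have hsup := congrArg Walk.support heq
  erw [Walk.support_copy, Walk.support_map] at hsup
  exact list_map_eq_self _ _ hsup

lemma midpoint_fix (hT : T.IsTree) {g : Γ} {a : V} (ha : g • a = a) (x : V) :
    ∃ c : V, g • c = c ∧ (∀ p : T.Walk x (g • x), p.IsPath → c ∈ p.support) ∧
      T.dist x (g • x) = T.dist x c + T.dist c (g • x) ∧
      T.dist x c = T.dist c (g • x) := by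
  obtain ⟨c, m1, m2, m3, d1, d2, d3⟩ := median hT a x (g • x)
  have hd : T.dist a x = T.dist a (g • x) := by
    conv_lhs => rw [← dist_smul_eq hact hT g a x, ha]
  have e : T.dist c x = T.dist c (g • x) := by omega
  obtain ⟨q, hq, -⟩ := hT.isConnected.exists_path_of_dist a x
  have hcq : c ∈ q.support := m1 q hq
  have hr : ((q.map (homOf hact g)).copy ha rfl).IsPath := by
    exact (Walk.isPath_copy _ _ _).2 (smul_walk_isPath hact g q hq)
  have hgc : g • c ∈ ((q.map (homOf hact g)).copy ha rfl).support := by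
    erw [Walk.support_copy, Walk.support_map]
    exact List.mem_map.2 ⟨c, hcq, rfl⟩
  have hc : c ∈ ((q.map (homOf hact g)).copy ha rfl).support := m2 _ hr
  have hdist : T.dist a (g • c) = T.dist a c := by
    conv_lhs => rw [← ha, dist_smul_eq hact hT]
  have := eq_of_mem_dist hT _ hr hgc hc hdist
  refine ⟨c, this, m3, d3, ?_⟩
  rw [dist_comm (G := T) (u := x) (v := c), e]

lemma pair_fix (hT : T.IsTree) {g h : Γ} {a b v : V} (ha : g • a = a) (hb : h • b = b)
    (hv : (g * h) • v = v) : ∃ c : V, g • c = c ∧ h • c = c := by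
  have hw : g⁻¹ • v = h • v := by
    rw [inv_smul_eq_iff, ← mul_smul, hv]
  have hga : g⁻¹ • a = a := by rw [inv_smul_eq_iff, ha]
  obtain ⟨c₁, hc₁, m₁, d₁, e₁⟩ := midpoint_fix hact hT hb v
  obtain ⟨c₂, hc₂, m₂, d₂, e₂⟩ := midpoint_fix hact hT hga v
  rw [hw] at m₂ d₂ e₂
  obtain ⟨p, hp, -⟩ := hT.isConnected.exists_path_of_dist v (h • v)
  have hdc : T.dist v c₁ = T.dist v c₂ := by
    have := dist_comm (G := T) (u := v) (v := c₁)
    omega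
  have : c₁ = c₂ := eq_of_mem_dist hT p hp (m₁ p hp) (m₂ p hp) hdc
  refine ⟨c₁, ?_, hc₁⟩
  rw [this]
  have := congrArg (g • ·) hc₂
  simpa using this.symm

end serreaux

/-- Serre's theorem: if a group acting on a tree is generated by `g 0 = 1, g 1, …, g n`
such that each product `g i * g j` (for `i < j`) fixes a vertex, then the whole group
fixes a vertex. -/
theorem serre_elliptic_on_tree {V : Type*} (T : SimpleGraph V) (hT : T.IsTree)
    {Γ : Type*} [Group Γ] [MulAction Γ V]
    (hact : ∀ (g : Γ) (u v : V), T.Adj u v ↔ T.Adj (g • u) (g • v))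
    (n : ℕ) (g : Fin (n + 1) → Γ) (hg0 : g 0 = 1)
    (hgen : Subgroup.closure (Set.range g) = ⊤)
    (hfix : ∀ i j : Fin (n + 1), i < j → ∃ v : V, (g i * g j) • v = v) :
    ∃ v : V, ∀ k : Γ, k • v = v := by
  classical
  obtain ⟨v0⟩ := hT.isConnected.nonempty
  have hell : ∀ i : Fin (n + 1), ∃ v : V, g i • v = v := by
    intro i
    rcases eq_or_ne i 0 with h | h
    · exact ⟨v0, by rw [h, hg0, one_smul]⟩
    · obtain ⟨v, hv⟩ := hfix 0 i (Fin.pos_of_ne_zero h)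
      rw [hg0, one_mul] at hv
      exact ⟨v, hv⟩
  set A : Fin (n + 1) → Set V := fun i => {v | g i • v = v} with hA
  have hconv : ∀ i, ConvexIn T (A i) := by
    intro i u hu v hv p hp w hw
    exact fix_convex hact hT hu hv p hp w hw
  have hpair : ∀ i j, (A i ∩ A j).Nonempty := by
    intro i j
    rcases lt_trichotomy i j with h | h | h
    · obtain ⟨ai, hai⟩ := hell i
      obtain ⟨aj, haj⟩ := hell j
      obtain ⟨v, hv⟩ := hfix i j h
      obtain ⟨c, hc1, hc2⟩ := pair_fix hact hT hai haj hv
      exact ⟨c, hc1, hc2⟩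
    · obtain ⟨a, ha⟩ := hell i
      exact ⟨a, ha, by rw [← h]; exact ha⟩
    · obtain ⟨ai, hai⟩ := hell i
      obtain ⟨aj, haj⟩ := hell j
      obtain ⟨v, hv⟩ := hfix j i h
      obtain ⟨c, hc1, hc2⟩ := pair_fix hact hT haj hai hv
      exact ⟨c, hc2, hc1⟩
  obtain ⟨v, hv⟩ := helly hT n A hconv hpair
  refine ⟨v, fun k => ?_⟩
  have hsub : Set.range g ⊆ (MulAction.stabilizer Γ v : Set Γ) := by
    rintro _ ⟨i, rfl⟩
    exact hv i
  have hle := (Subgroup.closure_le _).2 hsub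
  rw [hgen] at hle
  exact hle (Subgroup.mem_top k)
end
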